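/- Fix b₀ > 0, m > 0, Ω ≥ 0. Define F(t) = (2b₀m/(2b₀m+Ω))^m · ∑_{z=0}^∞ ((m)_z/(z!·Γ(z+1))) · (Ω/(2b₀m+Ω))^z · γ(z+1, t/(2b₀)) for t ≥ 0, where (m)_z is the Pochhammer symbol and γ is the lower incomplete gamma function. Then F is a cumulative distribution function on [0,∞): F is monotone nondecreasing, F(0) = 0, and lim_{t→∞} F(t) = 1. -/

import Mathlib

open MeasureTheory Real Set Filter

/-- The lower incomplete gamma function `γ(s,t) = ∫₀^t x^{s-1} e^{-x} dx`. -/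
noncomputable def lowerGamma (s t : ℝ) : ℝ := ∫ x in Set.Ioc (0 : ℝ) t, x ^ (s - 1) * Real.exp (-x)

/-- The Pochhammer symbol `(m)_z = m (m+1) ⋯ (m+z-1)`. -/
noncomputable def poch (m : ℝ) (z : ℕ) : ℝ := (ascPochhammer ℝ z).eval m


lemma lg_integrand (n : ℕ) :
    IntegrableOn (fun x : ℝ => x ^ ((n : ℝ) + 1 - 1) * Real.exp (-x)) (Ioi 0) := by
  have h := Real.GammaIntegral_convergent (s := (n : ℝ) + 1) (by positivity)
  exact h.congr_fun (fun x _ => mul_comm _ _) measurableSet_Ioi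

lemma lg_nonneg (n : ℕ) (t : ℝ) : 0 ≤ lowerGamma ((n : ℝ) + 1) t := by
  apply setIntegral_nonneg measurableSet_Ioc
  intro x hx
  have : (0:ℝ) < x := hx.1
  positivity

lemma lg_mono (n : ℕ) {s t : ℝ} (hst : s ≤ t) :
    lowerGamma ((n : ℝ) + 1) s ≤ lowerGamma ((n : ℝ) + 1) t := by
  apply setIntegral_mono_set ((lg_integrand n).mono_set Ioc_subset_Ioi_self)
  · filter_upwards [ae_restrict_mem measurableSet_Ioc] with x hx
    have : (0:ℝ) < x := hx.1
    positivity
  · exact HasSubset.Subset.eventuallyLE (Ioc_subset_Ioc_right hst)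

lemma lg_le (n : ℕ) (t : ℝ) : lowerGamma ((n : ℝ) + 1) t ≤ (n.factorial : ℝ) := by
  have h1 : lowerGamma ((n : ℝ) + 1) t ≤ ∫ x in Ioi (0:ℝ), x ^ ((n : ℝ) + 1 - 1) * Real.exp (-x) := by
    apply setIntegral_mono_set (lg_integrand n)
    · filter_upwards [ae_restrict_mem measurableSet_Ioi] with x hx
      have : (0:ℝ) < x := hx
      positivity
    · exact HasSubset.Subset.eventuallyLE Ioc_subset_Ioi_self
  have h2 : ∫ x in Ioi (0:ℝ), x ^ ((n : ℝ) + 1 - 1) * Real.exp (-x) = (n.factorial : ℝ) := by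
    rw [show (∫ x in Ioi (0:ℝ), x ^ ((n : ℝ) + 1 - 1) * Real.exp (-x))
        = ∫ x in Ioi (0:ℝ), Real.exp (-x) * x ^ ((n : ℝ) + 1 - 1) from by
      exact setIntegral_congr_fun measurableSet_Ioi fun x _ => mul_comm _ _]
    rw [← Real.Gamma_eq_integral (by positivity), Real.Gamma_nat_eq_factorial]
  linarith [h1, h2.le, h2.ge]

lemma lg_zero (n : ℕ) : lowerGamma ((n : ℝ) + 1) 0 = 0 := by
  simp [lowerGamma]

lemma lg_tendsto (n : ℕ) :
    Tendsto (fun t => lowerGamma ((n : ℝ) + 1) t) atTop (nhds (n.factorial : ℝ)) := by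
  have h := intervalIntegral_tendsto_integral_Ioi 0 (lg_integrand n) tendsto_id
  have h2 : ∫ x in Ioi (0:ℝ), x ^ ((n : ℝ) + 1 - 1) * Real.exp (-x) = (n.factorial : ℝ) := by
    rw [show (∫ x in Ioi (0:ℝ), x ^ ((n : ℝ) + 1 - 1) * Real.exp (-x))
        = ∫ x in Ioi (0:ℝ), Real.exp (-x) * x ^ ((n : ℝ) + 1 - 1) from by
      exact setIntegral_congr_fun measurableSet_Ioi fun x _ => mul_comm _ _]
    rw [← Real.Gamma_eq_integral (by positivity), Real.Gamma_nat_eq_factorial]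
  rw [h2] at h
  refine h.congr' ?_
  filter_upwards [eventually_ge_atTop (0:ℝ)] with t ht
  simp only [id_eq]
  rw [intervalIntegral.integral_of_le ht]
  rfl

lemma poch_zero (m : ℝ) : poch m 0 = 1 := by simp [poch]

lemma poch_succ (m : ℝ) (z : ℕ) : poch m (z + 1) = poch m z * (m + z) := by
  simp [poch, ascPochhammer_succ_eval]

lemma poch_pos {m : ℝ} (hm : 0 < m) (z : ℕ) : 0 < poch m z := by
  induction z with
  | zero => simp [poch_zero]
  | succ n ih => rw [poch_succ]; positivity

lemma a_pos {m : ℝ} (hm : 0 < m) (z : ℕ) : 0 < poch m z / z.factorial :=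
  div_pos (poch_pos hm z) (by positivity)

lemma a_succ {m : ℝ} (z : ℕ) :
    poch m (z + 1) / (z + 1).factorial = poch m z / z.factorial * ((m + z) / (z + 1)) := by
  rw [poch_succ, Nat.factorial_succ, div_mul_div_comm]
  push_cast
  ring_nf

lemma ratio_lim (c : ℝ) : Tendsto (fun n : ℕ => (c + n) / (n + 1)) atTop (nhds 1) := by
  have h : ∀ n : ℕ, (c + n) / ((n : ℝ) + 1) = (c - 1) / (n + 1) + 1 := by
    intro n
    have : ((n : ℝ) + 1) ≠ 0 := by positivity
    field_simp
    ring
  simp_rw [h]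
  have h0 : Tendsto (fun n : ℕ => (c - 1) / ((n : ℝ) + 1)) atTop (nhds 0) := by
    have := (tendsto_const_div_atTop_nhds_zero_nat (c - 1)).comp (tendsto_add_atTop_nat 1)
    simpa [Function.comp_def] using this
  simpa using h0.add tendsto_const_nhds

/-- A generic ratio-test lemma: if `f` is positive and `f (n+1) = f n * ((c + n)/(n+1) * r)`
with `0 ≤ r < 1`, then `∑ f n r^n`-style series converge. -/
lemma summable_of_poch_ratio {f : ℕ → ℝ} {c r : ℝ} (hf : ∀ n, 0 < f n)
    (hrec : ∀ n, f (n + 1) = f n * ((c + n) / (n + 1) * r)) (hr0 : 0 ≤ r) (hr1 : r < 1) :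
    Summable f := by
  rcases eq_or_lt_of_le hr0 with h | h
  · -- r = 0 : f (n+1) = 0, contradiction with positivity? no: f (n+1) = f n * 0 = 0
    exfalso
    have := hf 1
    rw [hrec 0, ← h] at this
    simp at this
  · apply summable_of_ratio_test_tendsto_lt_one hr1
    · exact Eventually.of_forall fun n => (hf n).ne'
    · have : ∀ n : ℕ, ‖f (n + 1)‖ / ‖f n‖ = (c + n) / (n + 1) * r := by
        intro n
        rw [Real.norm_eq_abs, Real.norm_eq_abs, abs_of_pos (hf (n + 1)), abs_of_pos (hf n),
          hrec n]
        exact mul_div_cancel_left₀ _ (hf n).ne'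
      simp_rw [this]
      have := (ratio_lim c).mul_const r
      simpa using this

lemma S1 {m : ℝ} (hm : 0 < m) {r : ℝ} (hr0 : 0 ≤ r) (hr1 : r < 1) :
    Summable (fun z : ℕ => poch m z / z.factorial * r ^ z) := by
  rcases eq_or_lt_of_le hr0 with h | h
  · apply summable_of_ne_finset_zero (s := {0})
    intro n hn
    simp only [Finset.mem_singleton] at hn
    rw [← h, zero_pow hn, mul_zero]
  · apply summable_of_poch_ratio (c := m) (r := r) _ _ h.le hr1
    · intro n
      exact mul_pos (a_pos hm n) (pow_pos h n)
    · intro n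
      rw [a_succ, pow_succ]
      ring

lemma S2 {m : ℝ} (hm : 0 < m) {r : ℝ} (hr0 : 0 ≤ r) (hr1 : r < 1) :
    Summable (fun z : ℕ => ((z : ℝ) + 1) * (poch m (z + 1) / (z + 1).factorial) * r ^ z) := by
  rcases eq_or_lt_of_le hr0 with h | h
  · apply summable_of_ne_finset_zero (s := {0})
    intro n hn
    simp only [Finset.mem_singleton] at hn
    rw [← h, zero_pow hn, mul_zero]
  · apply summable_of_poch_ratio (c := m + 1) (r := r) _ _ h.le hr1
    · intro n
      have := a_pos hm (n + 1)
      have h2 : (0:ℝ) < (n:ℝ) + 1 := by positivity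
      exact mul_pos (mul_pos h2 this) (pow_pos h n)
    · intro n
      have h1 : ((n:ℝ) + 1) ≠ 0 := by positivity
      have h2 : ((n:ℝ) + 2) ≠ 0 := by positivity
      rw [a_succ (z := n + 1), pow_succ]
      push_cast
      field_simp
      ring

lemma binom_tsum (m : ℝ) (hm : 0 < m) {x : ℝ} (hx0 : 0 ≤ x) (hx1 : x < 1) :
    ∑' z : ℕ, poch m z / z.factorial * x ^ z = ((1 - x) ^ m)⁻¹ := by
  set a : ℕ → ℝ := fun z => poch m z / z.factorial with ha
  set G : ℝ → ℝ := fun y => ∑' z : ℕ, a z * y ^ z with hGdef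
  set Dd : ℝ → ℝ := fun y => ∑' z : ℕ, a z * ((z : ℝ) * y ^ (z - 1)) with hDdef
  -- summability of the derivative series
  have SDgen : ∀ {r : ℝ}, 0 ≤ r → r < 1 → Summable (fun n : ℕ => a n * ((n : ℝ) * r ^ (n - 1))) := by
    intro r h0 h1
    rw [← summable_nat_add_iff 1]
    exact (S2 hm h0 h1).congr fun n => by
      simp only [ha, Nat.add_sub_cancel]
      push_cast
      ring
  -- the derivative of G
  have HD : ∀ y ∈ Ico (0:ℝ) 1, HasDerivAt G (Dd y) y := by
    intro y hy
    set r : ℝ := (y + 1) / 2 with hr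
    have hr0 : 0 < r := by rw [hr]; linarith [hy.1]
    have hyr : y < r := by rw [hr]; linarith [hy.2]
    have hr1 : r < 1 := by rw [hr]; linarith [hy.2]
    exact hasDerivAt_tsum_of_isPreconnected
      (u := fun n : ℕ => a n * ((n : ℝ) * r ^ (n - 1)))
      (g := fun (n : ℕ) (y : ℝ) => a n * y ^ n)
      (g' := fun (n : ℕ) (y : ℝ) => a n * ((n : ℝ) * y ^ (n - 1)))
      (SDgen hr0.le hr1) (isOpen_Ioo (a := -r) (b := r)) ((convex_Ioo _ _).isPreconnected)
      (fun n y' _ => (hasDerivAt_pow n y').const_mul (a n))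
      (by
        intro n y' hy'
        have hy'le : |y'| ≤ r := by rw [abs_le]; exact ⟨hy'.1.le, hy'.2.le⟩
        have h1 : ‖a n * ((n:ℝ) * y' ^ (n - 1))‖ = a n * ((n:ℝ) * |y'| ^ (n - 1)) := by
          rw [Real.norm_eq_abs, abs_mul, abs_mul, abs_pow, abs_of_pos (a_pos hm n),
            Nat.abs_cast]
        rw [h1]
        refine mul_le_mul_of_nonneg_left ?_ (a_pos hm n).le
        exact mul_le_mul_of_nonneg_left
          (pow_le_pow_left₀ (abs_nonneg _) hy'le _) (Nat.cast_nonneg n))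
      (mem_Ioo.mpr ⟨by linarith, hr0⟩)
      (by
        apply summable_of_ne_finset_zero (s := {0})
        intro n hn
        simp only [Finset.mem_singleton] at hn
        show a n * (0:ℝ) ^ n = 0
        rw [zero_pow hn, mul_zero])
      (mem_Ioo.mpr ⟨by linarith [hy.1], hyr⟩)
  -- the functional equation (1-y) D y = m G y
  have key : ∀ y ∈ Ico (0:ℝ) 1, (1 - y) * Dd y = m * G y := by
    intro y hy
    obtain ⟨hy0, hy1⟩ := hy
    have SA : Summable (fun z : ℕ => a z * y ^ z) := S1 hm hy0 hy1
    have SD : Summable (fun z : ℕ => a z * ((z:ℝ) * y ^ (z - 1))) := SDgen hy0 hy1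
    have SB : Summable (fun z : ℕ => (z:ℝ) * (a z * y ^ z)) := by
      rw [← summable_nat_add_iff 1]
      exact ((S2 hm hy0 hy1).mul_left y).congr fun n => by
        simp only [ha]
        push_cast
        ring
    have hDshift : Dd y = ∑' n : ℕ, a (n + 1) * (((n:ℝ) + 1) * y ^ n) := by
      rw [hDdef]
      simp only
      rw [Summable.tsum_eq_zero_add SD]
      simp only [Nat.cast_zero, zero_mul, mul_zero, zero_add, Nat.add_sub_cancel]
      exact tsum_congr fun n => by push_cast; ring
    have hcoef : ∀ n : ℕ, a (n + 1) * ((n:ℝ) + 1) = a n * (m + n) := by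
      intro n
      have h1 : ((n:ℝ) + 1) ≠ 0 := by positivity
      rw [ha]
      simp only
      rw [a_succ]
      field_simp
    have hD : Dd y = m * G y + ∑' n : ℕ, (n:ℝ) * (a n * y ^ n) := by
      rw [hDshift]
      have : ∀ n : ℕ, a (n + 1) * (((n:ℝ) + 1) * y ^ n)
          = m * (a n * y ^ n) + (n:ℝ) * (a n * y ^ n) := by
        intro n
        calc a (n + 1) * (((n:ℝ) + 1) * y ^ n) = (a (n + 1) * ((n:ℝ) + 1)) * y ^ n := by ring
          _ = (a n * (m + n)) * y ^ n := by rw [hcoef]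
          _ = m * (a n * y ^ n) + (n:ℝ) * (a n * y ^ n) := by ring
      rw [tsum_congr this, Summable.tsum_add (SA.mul_left m) SB, tsum_mul_left]
    have hB : ∑' n : ℕ, (n:ℝ) * (a n * y ^ n) = y * Dd y := by
      rw [hDshift, ← tsum_mul_left, Summable.tsum_eq_zero_add SB]
      simp only [Nat.cast_zero, zero_mul, zero_add]
      exact (tsum_congr fun n => by push_cast; ring).symm
    rw [hB] at hD
    rw [sub_mul, one_mul]
    linarith [hD]
  -- value at 0
  have hG0 : G 0 = 1 := by
    rw [hGdef]
    simp only
    rw [tsum_eq_single 0 (fun z hz => by rw [zero_pow hz, mul_zero])]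
    simp [ha, poch_zero]
  have h1x : (0:ℝ) < 1 - x := by linarith
  have hne : (1 - x) ^ m ≠ 0 := (Real.rpow_pos_of_pos h1x m).ne'
  -- derivative of H := (1-y)^m * G y is zero on [0,1)
  have HDH : ∀ y ∈ Ico (0:ℝ) 1, HasDerivAt (fun y => (1 - y) ^ m * G y) 0 y := by
    intro y hy
    have h1y : 0 < 1 - y := by linarith [hy.2]
    have base : HasDerivAt (fun y : ℝ => 1 - y) (-1) y := by
      simpa using (hasDerivAt_id y).const_sub 1
    have rp : HasDerivAt (fun y : ℝ => (1 - y) ^ m) (m * (1 - y) ^ (m - 1) * -1) y :=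
      (Real.hasDerivAt_rpow_const (p := m) (Or.inl h1y.ne')).comp y base
    have hmul := rp.mul (HD y hy)
    have hsplit : (1 - y) ^ m = (1 - y) ^ (m - 1) * (1 - y) := by
      have := Real.rpow_add_one h1y.ne' (m - 1)
      rw [sub_add_cancel] at this
      exact this
    have hk := key y hy
    refine hmul.congr_deriv (Eq.symm ?_)
    rw [hsplit]
    linear_combination (-(1 - y) ^ (m - 1)) * hk
  rcases eq_or_lt_of_le hx0 with h0 | h0
  · rw [← h0]
    have : (∑' z : ℕ, poch m z / z.factorial * (0:ℝ) ^ z) = G 0 := rfl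
    rw [this, hG0, sub_zero, Real.one_rpow, inv_one]
  · have hsub : Icc (0:ℝ) x ⊆ Ico (0:ℝ) 1 := fun y hy => ⟨hy.1, lt_of_le_of_lt hy.2 hx1⟩
    have hHconst : (1 - x) ^ m * G x = (1 - 0) ^ m * G 0 := by
      have hdiff : DifferentiableOn ℝ (fun y => (1 - y) ^ m * G y) (Icc 0 x) := fun y hy =>
        ((HDH y (hsub hy)).differentiableAt).differentiableWithinAt
      have hfd : ∀ y ∈ Icc (0:ℝ) x,
          fderivWithin ℝ (fun y => (1 - y) ^ m * G y) (Icc 0 x) y = 0 := by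
        intro y hy
        have hu := (uniqueDiffOn_Icc h0) y hy
        have h2 := ((HDH y (hsub hy)).hasFDerivAt.hasFDerivWithinAt).fderivWithin hu
        rw [h2]
        ext w
        simp
      exact (convex_Icc 0 x).is_const_of_fderivWithin_eq_zero hdiff hfd
        (right_mem_Icc.mpr h0.le) (left_mem_Icc.mpr h0.le)
    rw [hG0, sub_zero, Real.one_rpow, one_mul] at hHconst
    have hrfl : (∑' z : ℕ, poch m z / z.factorial * x ^ z) = G x := rfl
    rw [hrfl, inv_eq_one_div, eq_div_iff hne]
    linarith [hHconst]

/-- The shadowed-Rician power CDF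
`F(t) = (2b₀m/(2b₀m+Ω))^m ∑_z ((m)_z/(z!·Γ(z+1))) (Ω/(2b₀m+Ω))^z γ(z+1, t/(2b₀))`
is a genuine CDF on `[0,∞)`: it is monotone nondecreasing, `F(0) = 0`, and `F(t) → 1` as
`t → ∞`. -/
theorem stmt6 (b0 m Om : ℝ) (hb0 : 0 < b0) (hm : 0 < m) (hOm : 0 ≤ Om) :
    MonotoneOn (fun t : ℝ =>
        (2 * b0 * m / (2 * b0 * m + Om)) ^ m *
          ∑' z : ℕ, poch m z / (z.factorial * Real.Gamma (z + 1)) *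
            (Om / (2 * b0 * m + Om)) ^ z * lowerGamma (z + 1) (t / (2 * b0))) (Ici (0 : ℝ)) ∧
    ((2 * b0 * m / (2 * b0 * m + Om)) ^ m *
        ∑' z : ℕ, poch m z / (z.factorial * Real.Gamma (z + 1)) *
          (Om / (2 * b0 * m + Om)) ^ z * lowerGamma (z + 1) ((0 : ℝ) / (2 * b0))) = 0 ∧
    Tendsto (fun t : ℝ =>
        (2 * b0 * m / (2 * b0 * m + Om)) ^ m *
          ∑' z : ℕ, poch m z / (z.factorial * Real.Gamma (z + 1)) *
            (Om / (2 * b0 * m + Om)) ^ z * lowerGamma (z + 1) (t / (2 * b0)))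
      atTop (nhds 1) := by
  have h2bm : (0:ℝ) < 2 * b0 * m := by positivity
  have hD : (0:ℝ) < 2 * b0 * m + Om := by linarith
  set x0 : ℝ := Om / (2 * b0 * m + Om) with hx0def
  have hx00 : 0 ≤ x0 := div_nonneg hOm hD.le
  have hx01 : x0 < 1 := by rw [hx0def, div_lt_one hD]; linarith
  have hc : 2 * b0 * m / (2 * b0 * m + Om) = 1 - x0 := by
    rw [hx0def]
    field_simp
    ring
  have hcnn : (0:ℝ) ≤ (2 * b0 * m / (2 * b0 * m + Om)) ^ m :=
    Real.rpow_nonneg (div_nonneg h2bm.le hD.le) m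
  have hC0 : ∀ z : ℕ, 0 ≤ poch m z / (z.factorial * Real.Gamma ((z:ℝ) + 1)) * x0 ^ z := by
    intro z
    rw [Real.Gamma_nat_eq_factorial]
    have h1 := (poch_pos hm z).le
    have h2 : (0:ℝ) < z.factorial := by positivity
    positivity
  have hCb : ∀ z : ℕ,
      poch m z / (z.factorial * Real.Gamma ((z:ℝ) + 1)) * x0 ^ z * (z.factorial : ℝ)
        = poch m z / z.factorial * x0 ^ z := by
    intro z
    rw [Real.Gamma_nat_eq_factorial]
    have h2 : ((z.factorial : ℝ)) ≠ 0 := by positivity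
    field_simp
  have hbound_sum : Summable (fun z : ℕ => poch m z / z.factorial * x0 ^ z) := S1 hm hx00 hx01
  have htnn : ∀ (u : ℝ) (z : ℕ),
      0 ≤ poch m z / (z.factorial * Real.Gamma ((z:ℝ) + 1)) * x0 ^ z
        * lowerGamma ((z:ℝ) + 1) (u / (2 * b0)) :=
    fun u z => mul_nonneg (hC0 z) (lg_nonneg z _)
  have htle : ∀ (u : ℝ) (z : ℕ),
      poch m z / (z.factorial * Real.Gamma ((z:ℝ) + 1)) * x0 ^ z
        * lowerGamma ((z:ℝ) + 1) (u / (2 * b0)) ≤ poch m z / z.factorial * x0 ^ z := by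
    intro u z
    calc poch m z / (z.factorial * Real.Gamma ((z:ℝ) + 1)) * x0 ^ z
        * lowerGamma ((z:ℝ) + 1) (u / (2 * b0))
        ≤ poch m z / (z.factorial * Real.Gamma ((z:ℝ) + 1)) * x0 ^ z * (z.factorial : ℝ) :=
          mul_le_mul_of_nonneg_left (lg_le z _) (hC0 z)
      _ = poch m z / z.factorial * x0 ^ z := hCb z
  have hsummT : ∀ u : ℝ, Summable (fun z : ℕ =>
      poch m z / (z.factorial * Real.Gamma ((z:ℝ) + 1)) * x0 ^ z
        * lowerGamma ((z:ℝ) + 1) (u / (2 * b0))) :=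
    fun u => Summable.of_nonneg_of_le (htnn u) (htle u) hbound_sum
  refine ⟨?_, ?_, ?_⟩
  · intro s _ t _ hst
    refine mul_le_mul_of_nonneg_left ?_ hcnn
    refine Summable.tsum_le_tsum (fun z => ?_) (hsummT s) (hsummT t)
    refine mul_le_mul_of_nonneg_left (lg_mono z ?_) (hC0 z)
    gcongr
  · refine mul_eq_zero_of_right _ ?_
    have h : ∀ z : ℕ, poch m z / (z.factorial * Real.Gamma ((z:ℝ) + 1)) * x0 ^ z
        * lowerGamma ((z:ℝ) + 1) ((0:ℝ) / (2 * b0)) = 0 := by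
      intro z
      rw [zero_div, lg_zero, mul_zero]
    exact (tsum_congr h).trans tsum_zero
  · have hlim : Tendsto (fun t : ℝ => ∑' z : ℕ,
        poch m z / (z.factorial * Real.Gamma ((z:ℝ) + 1)) * x0 ^ z
          * lowerGamma ((z:ℝ) + 1) (t / (2 * b0)))
        atTop (nhds (∑' z : ℕ, poch m z / z.factorial * x0 ^ z)) := by
      apply tendsto_tsum_of_dominated_convergence hbound_sum
      · intro z
        have h1 : Tendsto (fun t : ℝ => t / (2 * b0)) atTop atTop :=
          Tendsto.atTop_div_const (by positivity) tendsto_id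
        have h2 := (lg_tendsto z).comp h1
        have h3 := h2.const_mul (poch m z / (z.factorial * Real.Gamma ((z:ℝ) + 1)) * x0 ^ z)
        rw [← hCb z]
        exact h3
      · refine Eventually.of_forall fun t => fun z => ?_
        rw [Real.norm_eq_abs, abs_of_nonneg (htnn t z)]
        exact htle t z
    have hfinal := hlim.const_mul ((2 * b0 * m / (2 * b0 * m + Om)) ^ m)
    have hne : ((1 - x0) ^ m : ℝ) ≠ 0 :=
      (Real.rpow_pos_of_pos (by linarith) m).ne'
    have hone : (2 * b0 * m / (2 * b0 * m + Om)) ^ m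
        * ∑' z : ℕ, poch m z / z.factorial * x0 ^ z = 1 := by
      rw [binom_tsum m hm hx00 hx01, hc, mul_inv_cancel₀ hne]
    rw [hone] at hfinal
    exact hfinal
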